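/- arXiv:2411.08803 — 2 statements merged into one kernel-verified Lean document; each statement's English description precedes it below -/
import Mathlib

section
/- For every finite group G and every irreducible complex character χ of G, the sum of the values of χ over a set of representatives of the conjugacy classes of G is a non-negative integer. -/
open FDRep Representation MulAction Module CategoryTheory.MonoidalCategory

noncomputable def conjPermRep (G : Type) [Group G] [Fintype G] : FDRep ℂ G :=
  FDRep.of ((Representation.ofMulAction ℂ (ConjAct G) G).comp ConjAct.toConjAct.toMonoidHom)

open scoped Classical in
lemma conjPermRep_char (G : Type) [Group G] [Fintype G] (x : G) :
    (conjPermRep G).character x =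
      (Fintype.card (stabilizer (ConjAct G) x) : ℂ) := by
  have h1 : (conjPermRep G).character x =
      LinearMap.trace ℂ (MonoidAlgebra ℂ G)
        ((Representation.ofMulAction ℂ (ConjAct G) G) (ConjAct.toConjAct x)) := rfl
  rw [h1, LinearMap.trace_eq_matrix_trace ℂ (MonoidAlgebra.basis G ℂ), Matrix.trace]
  have h2 : ∀ a : G, Matrix.diag
      ((LinearMap.toMatrix (MonoidAlgebra.basis G ℂ) (MonoidAlgebra.basis G ℂ))
        ((Representation.ofMulAction ℂ (ConjAct G) G) (ConjAct.toConjAct x))) a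
      = if x * a * x⁻¹ = a then (1 : ℂ) else 0 := by
    intro a
    rw [Matrix.diag, LinearMap.toMatrix_apply]
    simp [Representation.ofMulAction_single, ConjAct.toConjAct_smul, Finsupp.single_apply]
    change (MonoidAlgebra.single (x * a * x⁻¹) (1:ℂ)).coeff a = _
    rw [MonoidAlgebra.coeff_single, Finsupp.single_apply]
  rw [Finset.sum_congr rfl fun a _ => h2 a, Finset.sum_boole]
  have e : {a : G // x * a * x⁻¹ = a} ≃ stabilizer (ConjAct G) x := by
    refine Equiv.subtypeEquiv ConjAct.toConjAct.toEquiv ?_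
    intro a
    simp only [mem_stabilizer_iff, MulEquiv.toEquiv_eq_coe, MulEquiv.coe_toEquiv,
      ConjAct.toConjAct_smul]
    constructor
    · intro h; rw [mul_inv_eq_iff_eq_mul] at h ⊢; rw [← h]
    · intro h; rw [mul_inv_eq_iff_eq_mul] at h ⊢; rw [← h]
  rw [show (Finset.filter (fun a : G => x * a * x⁻¹ = a) Finset.univ).card
        = Fintype.card {a : G // x * a * x⁻¹ = a} from (Fintype.card_subtype _).symm,
    Fintype.card_congr e]

/-- For every finite group `G` and every irreducible complex character
`χ` of `G`, the sum of the values of `χ` over a set of representatives of the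
conjugacy classes of `G` is a non-negative integer. -/
theorem row_sum_of_irreducible_character_is_nonneg_integer
    {G : Type} [Group G] [Fintype G] {d : ℕ}
    (g : Fin (d + 1) → G)
    (hg : ∀ x : G, ∃! i : Fin (d + 1), IsConj (g i) x)
    (V : FDRep ℂ G) (hV : CategoryTheory.Simple V) :
    ∃ m : ℕ, ∑ i, V.character (g i) = (m : ℂ) := by
  classical
  haveI : Invertible (Fintype.card G : ℂ) :=
    invertibleOfNonzero (Nat.cast_ne_zero.mpr Fintype.card_ne_zero)
  refine ⟨finrank ℂ (invariants (V ⊗ conjPermRep G).ρ), ?_⟩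
  have havg := FDRep.average_char_eq_finrank_invariants (V ⊗ conjPermRep G)
  -- compute the total sum
  set idx : G → Fin (d + 1) := fun x => (hg x).choose with hidx
  have hidx_spec : ∀ x : G, IsConj (g (idx x)) x := fun x => (hg x).choose_spec.1
  have hidx_unique : ∀ (x : G) (i : Fin (d + 1)), IsConj (g i) x → idx x = i :=
    fun x i hi => ((hg x).choose_spec.2 i hi).symm
  have hfiber : ∀ i, Finset.filter (fun x => idx x = i) Finset.univ
      = Finset.filter (fun x => IsConj (g i) x) Finset.univ := by
    intro i
    ext x
    simp only [Finset.mem_filter, Finset.mem_univ, true_and]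
    exact ⟨fun h => h ▸ hidx_spec x, fun h => hidx_unique x i h⟩
  have horbit : ∀ i (x : G), IsConj (g i) x →
      orbit (ConjAct G) x = orbit (ConjAct G) (g i) := by
    intro i x hx
    apply orbit_eq_iff.mpr
    rw [ConjAct.mem_orbit_conjAct]
    exact hx.symm
  have hcardorbit : ∀ i, (Finset.filter (fun x => IsConj (g i) x) Finset.univ).card
      = Fintype.card (orbit (ConjAct G) (g i)) := by
    intro i
    rw [show (Finset.filter (fun x : G => IsConj (g i) x) Finset.univ).card
        = Fintype.card {x : G // IsConj (g i) x} from (Fintype.card_subtype _).symm]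
    refine Fintype.card_congr (Equiv.subtypeEquivRight fun x => ?_)
    rw [ConjAct.mem_orbit_conjAct, isConj_comm]
  have hstab : ∀ i (x : G), IsConj (g i) x →
      Fintype.card (stabilizer (ConjAct G) x)
        = Fintype.card (stabilizer (ConjAct G) (g i)) := by
    intro i x hx
    have h1 := card_orbit_mul_card_stabilizer_eq_card_group (ConjAct G) x
    have h2 := card_orbit_mul_card_stabilizer_eq_card_group (ConjAct G) (g i)
    have horb : Fintype.card (orbit (ConjAct G) x)
        = Fintype.card (orbit (ConjAct G) (g i)) := by rw [horbit i x hx]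
    rw [horb] at h1
    haveI : Nonempty (orbit (ConjAct G) (g i)) := ⟨⟨g i, mem_orbit_self _⟩⟩
    have hne : Fintype.card (orbit (ConjAct G) (g i)) ≠ 0 := Fintype.card_ne_zero
    exact Nat.eq_of_mul_eq_mul_left (Nat.pos_of_ne_zero hne) (h1.trans h2.symm)
  have hchar : ∀ i (x : G), IsConj (g i) x → V.character x = V.character (g i) := by
    intro i x hx
    obtain ⟨c, hc⟩ := isConj_iff.mp hx
    rw [← hc, FDRep.char_conj]
  have htotal : ∑ x : G, (V ⊗ conjPermRep G).character x
      = (Fintype.card G : ℂ) * ∑ i, V.character (g i) := by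
    rw [← Finset.sum_fiberwise Finset.univ idx
      (fun x => (V ⊗ conjPermRep G).character x), Finset.mul_sum]
    refine Finset.sum_congr rfl fun i _ => ?_
    rw [hfiber i]
    have hconst : ∀ x ∈ Finset.filter (fun x => IsConj (g i) x) Finset.univ,
        (V ⊗ conjPermRep G).character x
          = V.character (g i) * (Fintype.card (stabilizer (ConjAct G) (g i)) : ℂ) := by
      intro x hx
      rw [Finset.mem_filter] at hx
      rw [FDRep.char_tensor, Pi.mul_apply, conjPermRep_char, hchar i x hx.2,
        hstab i x hx.2]
    rw [Finset.sum_congr rfl hconst, Finset.sum_const, hcardorbit i, nsmul_eq_mul]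
    have := card_orbit_mul_card_stabilizer_eq_card_group (ConjAct G) (g i)
    have hcast : (Fintype.card (orbit (ConjAct G) (g i)) : ℂ)
        * (Fintype.card (stabilizer (ConjAct G) (g i)) : ℂ) = (Fintype.card G : ℂ) := by
      rw [← Nat.cast_mul, this]; rfl
    rw [mul_comm (V.character (g i)) _, ← mul_assoc, hcast]
  rw [htotal, ← mul_assoc, Nat.card_eq_fintype_card, inv_mul_cancel₀ (Nat.cast_ne_zero.mpr Fintype.card_ne_zero), one_mul] at havg
  exact havg
end

section
/- Let T̃ = End_{H_1}(ℂS_n) where H_1 = Inn(S_n) ⋊ ⟨φ⟩ (φ the inversion map) acts on ℂS_n, and let λ ⊢ n. Then the sum of the dimensions of the irreducible T̃-modules corresponding to the signed partitions λ⁺ and λ⁻ (with the zero module allowed) equals the row sum d_{χ^λ} = ∑_{μ ⊢ n} χ^λ_μ of the character table of S_n. -/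
open Polynomial

/-- Evaluating the characteristic polynomial of a complex matrix. -/
private lemma charpoly_eval'_aux {ι : Type*} [Fintype ι] [DecidableEq ι] (A : Matrix ι ι ℂ)
    (x : ℂ) : (Matrix.charpoly A).eval x = (x • (1 : Matrix ι ι ℂ) - A).det := by
  rw [Matrix.charpoly, eval_det, Matrix.matPolyEquiv_charmatrix]
  simp [Matrix.scalar, Matrix.smul_one_eq_diagonal]
  congr 1

/-- Roots of the characteristic polynomial of a matrix of finite order are roots of unity. -/
private lemma root_pow_eq_one_aux {ι : Type*} [Fintype ι] [DecidableEq ι] {A : Matrix ι ι ℂ}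
    {m : ℕ} (hA : A ^ m = 1) {μ : ℂ} (hμ : μ ∈ (Matrix.charpoly A).roots) :
    μ ^ m = 1 := by
  have hroot : (Matrix.charpoly A).eval μ = 0 :=
    Polynomial.isRoot_of_mem_roots hμ
  rw [charpoly_eval'_aux] at hroot
  obtain ⟨v, hv0, hv⟩ := (Matrix.exists_mulVec_eq_zero_iff).mpr hroot
  have hAv : A.mulVec v = μ • v := by
    rw [Matrix.sub_mulVec, Matrix.smul_mulVec, Matrix.one_mulVec, sub_eq_zero] at hv
    exact hv.symm
  have hpow : ∀ k : ℕ, (A ^ k).mulVec v = μ ^ k • v := by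
    intro k
    induction k with
    | zero => simp [Matrix.one_mulVec]
    | succ k ih =>
      rw [pow_succ', pow_succ', ← Matrix.mulVec_mulVec, ih, Matrix.mulVec_smul, hAv,
        smul_smul, mul_comm]
  have h1 := hpow m
  rw [hA, Matrix.one_mulVec] at h1
  obtain ⟨i, hi⟩ := Function.ne_iff.mp hv0
  have h2 : v i = μ ^ m * v i := by simpa using congrFun h1 i
  have h3 : μ ^ m * v i = 1 * v i := by rw [one_mul, ← h2]
  exact mul_right_cancel₀ hi h3

/-- For a complex matrix of finite order, the trace of the inverse is the complex conjugate
of the trace. -/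
private lemma trace_inv_eq_conj_trace_aux {ι : Type*} [Fintype ι] [DecidableEq ι]
    {A B : Matrix ι ι ℂ} (hB : A * B = 1) {m : ℕ} (hm : 0 < m) (hA : A ^ m = 1)
    (hroots : ∀ μ ∈ (Matrix.charpoly A).roots, μ ^ m = 1) :
    B.trace = starRingEnd ℂ A.trace := by
  set s := (Matrix.charpoly A).roots with hs
  have hne : ∀ μ ∈ s, μ ≠ 0 := by
    intro μ hμ h0
    have := hroots μ hμ
    rw [h0, zero_pow hm.ne'] at this
    exact zero_ne_one this
  -- charpoly of B
  have key : Matrix.charpoly B = (s.map fun a => X - C a⁻¹).prod := by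
    apply Polynomial.eq_of_infinite_eval_eq
    apply Set.Infinite.mono (s := {x : ℂ | x ≠ 0} \ {x | x ∈ s.toFinset.image (·⁻¹)})
    swap
    · apply Set.Infinite.diff
      · exact Set.Finite.infinite_compl (Set.finite_singleton (0:ℂ))
      · exact Set.Finite.ofFinset (s.toFinset.image (·⁻¹)) (by simp)
    intro x hx
    have hx0 : x ≠ 0 := hx.1
    have hBA : B * A = 1 := mul_eq_one_comm.mp hB
    have e1 : x • (1 : Matrix ι ι ℂ) - B = B * (x • A - 1) := by
      rw [Matrix.mul_sub, Matrix.mul_smul, hBA, mul_one]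
    have e2 : x • A - (1 : Matrix ι ι ℂ) = (-x) • (x⁻¹ • (1 : Matrix ι ι ℂ) - A) := by
      rw [smul_sub, smul_smul, neg_mul, mul_inv_cancel₀ hx0, neg_smul, neg_smul, one_smul,
        sub_neg_eq_add]
      abel
    have hdetA : A.det = s.prod := Matrix.det_eq_prod_roots_charpoly A
    have hdetB : B.det * s.prod = 1 := by
      have := congrArg Matrix.det hB
      rw [Matrix.det_mul, Matrix.det_one] at this
      rw [mul_comm, ← hdetA]; exact this
    show (Matrix.charpoly B).eval x = _
    rw [charpoly_eval'_aux, e1, Matrix.det_mul, e2, Matrix.det_smul, ← charpoly_eval'_aux,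
      (IsAlgClosed.splits (Matrix.charpoly A)).eq_prod_roots_of_monic (Matrix.charpoly_monic A)]
    have hcard : (Multiset.card s) = Fintype.card ι := by
      rw [hs, ← Matrix.charpoly_natDegree_eq_dim A]
      exact (Polynomial.splits_iff_card_roots.mp (IsAlgClosed.splits _))
    rw [← hcard]
    simp only [Polynomial.eval_multiset_prod, Multiset.map_map, Function.comp,
      Polynomial.eval_sub, Polynomial.eval_X, Polynomial.eval_C]
    have hBdet : B.det = (s.map fun a => a⁻¹).prod := by
      have h1 : (s.map fun a => a⁻¹).prod * s.prod = 1 := by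
        rw [show s.prod = (s.map (fun a => a)).prod by rw [Multiset.map_id'],
          ← Multiset.prod_map_mul]
        apply Multiset.prod_eq_one
        intro x hx
        obtain ⟨a, ha, rfl⟩ := Multiset.mem_map.mp hx
        exact inv_mul_cancel₀ (hne a ha)
      have hsne : s.prod ≠ 0 := fun h => hne 0 (Multiset.prod_eq_zero_iff.mp h) rfl
      exact mul_right_cancel₀ hsne (hdetB.trans h1.symm)
    rw [hBdet, ← Multiset.prod_replicate, ← Multiset.map_const', ← Multiset.prod_map_mul,
      ← Multiset.prod_map_mul]
    apply congrArg Multiset.prod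
    apply Multiset.map_congr rfl
    intro a ha
    have ha0 := hne a ha
    field_simp
    ring
  have htraceB : B.trace = (s.map fun a => a⁻¹).sum := by
    rw [Matrix.trace_eq_sum_roots_charpoly, key]
    rw [show (s.map fun a => X - C a⁻¹) = ((s.map fun a => a⁻¹).map fun a => X - C a) by
      rw [Multiset.map_map]; rfl]
    rw [Polynomial.roots_multiset_prod_X_sub_C]
  rw [htraceB, Matrix.trace_eq_sum_roots_charpoly, map_multiset_sum]
  congr 1
  apply Multiset.map_congr rfl
  intro a ha
  have h1 : a * (starRingEnd ℂ) a = 1 := by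
    rw [Complex.mul_conj]
    norm_cast
    have habs : ‖a‖ ^ m = 1 := by
      rw [← norm_pow, hroots a ha, norm_one]
    have : ‖a‖ = 1 := by
      rcases lt_trichotomy ‖a‖ 1 with h | h | h
      · exfalso; nlinarith [pow_lt_one₀ (norm_nonneg a) h hm.ne', habs]
      · exact h
      · exfalso; nlinarith [one_lt_pow₀ h hm.ne', habs]
    rw [Complex.normSq_eq_norm_sq, this]; norm_num
  exact (inv_eq_of_mul_eq_one_right h1)

/-- Characters of finite groups over `ℂ` satisfy `conj (χ g) = χ g⁻¹`. -/
private lemma conj_char_eq_aux {G : Type} [Group G] [Fintype G] (V : FDRep ℂ G) (g : G) :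
    starRingEnd ℂ (V.character g) = V.character g⁻¹ := by
  classical
  let b := Module.finBasis ℂ V
  have htr : ∀ h : G, V.character h = (LinearMap.toMatrixAlgEquiv b (V.ρ h)).trace := by
    intro h
    show LinearMap.trace ℂ V (V.ρ h) = _
    rw [LinearMap.trace_eq_matrix_trace ℂ b]
    rfl
  have hAB : (LinearMap.toMatrixAlgEquiv b (V.ρ g)) *
      (LinearMap.toMatrixAlgEquiv b (V.ρ g⁻¹)) = 1 := by
    rw [← map_mul, ← map_mul, mul_inv_cancel, map_one, map_one]
  have hApow : (LinearMap.toMatrixAlgEquiv b (V.ρ g)) ^ (orderOf g) = 1 := by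
    rw [← map_pow, ← map_pow, pow_orderOf_eq_one, map_one, map_one]
  rw [htr g, htr g⁻¹]
  exact (trace_inv_eq_conj_trace_aux hAB (orderOf_pos g) hApow
    (fun μ hμ => root_pow_eq_one_aux hApow hμ)).symm ▸ rfl

/-- Summing a class function against centralizer orders gives `|G|` times the sum over the
conjugacy classes. -/
private lemma class_sum_aux {G : Type} [Group G] [Fintype G] [DecidableEq G] {P : Type*}
    [Fintype P] (r : P → G) (hr : ∀ x : G, ∃! μ : P, IsConj (r μ) x) (F : G → ℂ)
    (hF : ∀ (h g : G), F (h * g * h⁻¹) = F g) :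
    ∑ g : G, (Fintype.card {x : G // g * x * g⁻¹ = x} : ℂ) * F g
      = (Fintype.card G : ℂ) * ∑ μ : P, F (r μ) := by
  classical
  have hcent : ∀ g : G, Fintype.card {x : G // g * x * g⁻¹ = x} =
      Fintype.card (MulAction.stabilizer (ConjAct G) g) := by
    intro g
    apply Fintype.card_congr
    apply Equiv.subtypeEquiv (ConjAct.toConjAct : G ≃* ConjAct G).toEquiv
    intro x
    rw [MulAction.mem_stabilizer_iff, ConjAct.smul_def]
    simp only [MulEquiv.toEquiv_eq_coe, EquivLike.coe_coe, ConjAct.ofConjAct_toConjAct]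
    rw [mul_inv_eq_iff_eq_mul, mul_inv_eq_iff_eq_mul]
    exact ⟨fun h => h.symm, fun h => h.symm⟩
  have hstab : ∀ (μ : P) (g : G), IsConj (r μ) g →
      Fintype.card (MulAction.stabilizer (ConjAct G) g) =
      Fintype.card (MulAction.stabilizer (ConjAct G) (r μ)) := by
    intro μ g hconj
    obtain ⟨h, hh⟩ := isConj_iff.mp hconj
    have horb : MulAction.orbitRel (ConjAct G) G g (r μ) := by
      rw [MulAction.orbitRel_apply, MulAction.mem_orbit_iff]
      exact ⟨ConjAct.toConjAct h, by rw [ConjAct.smul_def, ConjAct.ofConjAct_toConjAct]; exact hh⟩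
    exact Fintype.card_congr (MulAction.stabilizerEquivStabilizerOfOrbitRel horb).toEquiv
  set φ : G → P := fun g => (hr g).choose with hφdef
  have hφ : ∀ g, IsConj (r (φ g)) g := fun g => (hr g).choose_spec.1
  have hφu : ∀ (g : G) (μ : P), IsConj (r μ) g → μ = φ g := fun g μ h =>
    (hr g).choose_spec.2 μ h
  rw [← Fintype.sum_fiberwise φ (fun g => (Fintype.card {x : G // g * x * g⁻¹ = x} : ℂ) * F g)]
  rw [Finset.mul_sum]
  apply Finset.sum_congr rfl
  intro μ _
  have hfib : ∀ g : {g : G // φ g = μ}, IsConj (r μ) (g : G) := by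
    rintro ⟨g, hg⟩; exact hg ▸ hφ g
  have hterm : ∀ g : {g : G // φ g = μ},
      (Fintype.card {x : G // (g : G) * x * (g : G)⁻¹ = x} : ℂ) * F (g : G)
        = (Fintype.card (MulAction.stabilizer (ConjAct G) (r μ)) : ℂ) * F (r μ) := by
    intro g
    obtain ⟨h, hh⟩ := isConj_iff.mp (hfib g)
    rw [hcent, hstab μ _ (hfib g), ← hh, hF]
  rw [Finset.sum_congr rfl (fun g _ => hterm g), Finset.sum_const, Finset.card_univ,
    nsmul_eq_mul]
  have hcardfib : Fintype.card {g : G // φ g = μ} =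
      Fintype.card (MulAction.orbit (ConjAct G) (r μ)) := by
    apply Fintype.card_congr
    apply Equiv.subtypeEquivRight
    intro g
    rw [MulAction.mem_orbit_iff]
    constructor
    · intro hg
      obtain ⟨h, hh⟩ := isConj_iff.mp (hg ▸ hφ g)
      exact ⟨ConjAct.toConjAct h, by rw [ConjAct.smul_def, ConjAct.ofConjAct_toConjAct]; exact hh⟩
    · rintro ⟨h, rfl⟩
      refine (hφu _ μ ?_).symm
      rw [ConjAct.smul_def]
      exact isConj_iff.mpr ⟨ConjAct.ofConjAct h, rfl⟩
  rw [hcardfib, ← mul_assoc]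
  norm_cast
  rw [MulAction.card_orbit_mul_card_stabilizer_eq_card_group (ConjAct G) (r μ)]
  rw [ConjAct.card]

/-- Let `H₁ = Inn(S_n) ⋊ ⟨φ⟩ ≅ S_n × C_2` (with `φ` the inversion
map) act on `S_n` by `(g, ε) • x = g xᵉ g⁻¹`, with permutation character `π`.  For
an irreducible character `χ = χ^λ` of `S_n`, the irreducible `T̃`-modules of
`T̃ = End_{H₁}(ℂ S_n)` corresponding to the signed partitions `λ⁺` and `λ⁻` have
dimensions equal to the multiplicities `⟨π, χ^{λ⁺}⟩` and `⟨π, χ^{λ⁻}⟩`, and their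
sum equals the row sum `∑_{μ ⊢ n} χ^λ_μ` of the character table of `S_n`. -/
theorem sum_multiplicities_plus_minus_eq_row_sum
    (n : ℕ) (hn : 3 ≤ n)
    (V : FDRep ℂ (Equiv.Perm (Fin n))) (hV : CategoryTheory.Simple V)
    (r : Nat.Partition n → Equiv.Perm (Fin n))
    (hr : ∀ x : Equiv.Perm (Fin n), ∃! μ : Nat.Partition n, IsConj (r μ) x)
    (act : Equiv.Perm (Fin n) × Multiplicative (ZMod 2) →
      Equiv.Perm (Fin n) → Equiv.Perm (Fin n))
    (hact : ∀ (g : Equiv.Perm (Fin n)) (ε : Multiplicative (ZMod 2))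
      (x : Equiv.Perm (Fin n)),
      act (g, ε) x = if ε = 1 then g * x * g⁻¹ else g * x⁻¹ * g⁻¹)
    (π : Equiv.Perm (Fin n) × Multiplicative (ZMod 2) → ℂ)
    (hπ : ∀ h, π h = (Fintype.card {x : Equiv.Perm (Fin n) // act h x = x} : ℂ))
    (sgn : Multiplicative (ZMod 2) → ℂ)
    (hsgn : ∀ ε, sgn ε = if ε = 1 then 1 else -1) :
    (1 / (Fintype.card (Equiv.Perm (Fin n) × Multiplicative (ZMod 2)) : ℂ)) *
        (∑ h : Equiv.Perm (Fin n) × Multiplicative (ZMod 2),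
          π h * (starRingEnd ℂ) (V.character h.1)) +
      (1 / (Fintype.card (Equiv.Perm (Fin n) × Multiplicative (ZMod 2)) : ℂ)) *
        (∑ h : Equiv.Perm (Fin n) × Multiplicative (ZMod 2),
          π h * (starRingEnd ℂ) (V.character h.1 * sgn h.2)) =
      ∑ μ : Nat.Partition n, V.character (r μ) := by
  classical
  have hsgnconj : ∀ ε, starRingEnd ℂ (sgn ε) = sgn ε := by
    intro ε; rw [hsgn]; split <;> simp
  -- combine the two sums
  have hsum : (∑ h : Equiv.Perm (Fin n) × Multiplicative (ZMod 2),
        π h * starRingEnd ℂ (V.character h.1)) +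
      (∑ h : Equiv.Perm (Fin n) × Multiplicative (ZMod 2),
        π h * starRingEnd ℂ (V.character h.1 * sgn h.2)) =
      2 * ∑ g : Equiv.Perm (Fin n), π (g, 1) * starRingEnd ℂ (V.character g) := by
    rw [← Finset.sum_add_distrib]
    have hterm : ∀ h : Equiv.Perm (Fin n) × Multiplicative (ZMod 2),
        π h * starRingEnd ℂ (V.character h.1) + π h * starRingEnd ℂ (V.character h.1 * sgn h.2)
          = π h * starRingEnd ℂ (V.character h.1) * (1 + sgn h.2) := by
      intro h; rw [map_mul, hsgnconj]; ring
    rw [Finset.sum_congr rfl (fun h _ => hterm h), Fintype.sum_prod_type, Finset.mul_sum]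
    apply Finset.sum_congr rfl
    intro g _
    rw [Finset.sum_eq_single (1 : Multiplicative (ZMod 2))]
    · rw [hsgn]; simp; ring
    · intro ε _ hne; rw [hsgn, if_neg hne]; ring
    · intro h; exact absurd (Finset.mem_univ _) h
  -- identify the permutation character values
  have hπ1 : ∀ g : Equiv.Perm (Fin n),
      π (g, 1) = (Fintype.card {x : Equiv.Perm (Fin n) // g * x * g⁻¹ = x} : ℂ) := by
    intro g
    rw [hπ]
    exact_mod_cast congrArg (Nat.cast (R := ℂ)) (Fintype.card_congr
      (Equiv.subtypeEquivRight (fun x => by rw [hact g 1 x]; simp)))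
  have hclass : ∑ g : Equiv.Perm (Fin n),
      (Fintype.card {x : Equiv.Perm (Fin n) // g * x * g⁻¹ = x} : ℂ) *
        starRingEnd ℂ (V.character g)
      = (Fintype.card (Equiv.Perm (Fin n)) : ℂ) *
        ∑ μ : Nat.Partition n, starRingEnd ℂ (V.character (r μ)) :=
    class_sum_aux r hr _ (fun h g => by simp only [FDRep.char_conj])
  -- conjugate of character values on class representatives
  have hconj : ∀ μ : Nat.Partition n,
      starRingEnd ℂ (V.character (r μ)) = V.character (r μ) := by
    intro μ
    have hcc : IsConj ((r μ)⁻¹) (r μ) := by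
      rw [Equiv.Perm.isConj_iff_cycleType_eq, Equiv.Perm.cycleType_inv]
    obtain ⟨h, hh⟩ := isConj_iff.mp hcc
    have hcf := FDRep.char_conj V ((r μ)⁻¹) h
    rw [hh] at hcf
    rw [conj_char_eq_aux]
    exact hcf.symm
  -- assemble
  have hN0 : (Fintype.card (Equiv.Perm (Fin n)) : ℂ) ≠ 0 :=
    (Nat.cast_ne_zero (R := ℂ)).mpr Fintype.card_ne_zero
  have hcard2 : (Fintype.card (Equiv.Perm (Fin n) × Multiplicative (ZMod 2)) : ℂ)
      = 2 * (Fintype.card (Equiv.Perm (Fin n)) : ℂ) := by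
    rw [Fintype.card_prod,
      show Fintype.card (Multiplicative (ZMod 2)) = 2 from
        (Fintype.card_congr Multiplicative.toAdd).trans (ZMod.card 2)]
    push_cast
    ring
  rw [← mul_add, hsum,
    Finset.sum_congr rfl (fun g (_ : g ∈ Finset.univ) => by rw [hπ1 g]), hclass,
    Finset.sum_congr rfl (fun μ (_ : μ ∈ Finset.univ) => hconj μ), hcard2]
  field_simp
end
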